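/- If f : 𝒳 → ℝ is differentiable on an open convex set 𝒳 ⊆ ℝⁿ with minimizer x* ∈ 𝒳, γ ∈ (0,1], and f satisfies f(x*) ≥ f(x) + (1/γ)·⟨∇f(x), x* − x⟩ for all x ∈ 𝒳 (the case μ = 0), then for all x ∈ 𝒳 and t ∈ [0,1], f(t·x* + (1−t)·x) ≤ γt·f(x*) + (1−γt)·f(x). -/

import Mathlib

open RealInnerProductSpace

theorem quasar_convex_segment_bound {n : ℕ}
    (s : Set (EuclideanSpace ℝ (Fin n))) (hs : IsOpen s) (hconv : Convex ℝ s)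
    (f : EuclideanSpace ℝ (Fin n) → ℝ)
    (hdiff : ∀ x ∈ s, DifferentiableAt ℝ f x)
    (xstar : EuclideanSpace ℝ (Fin n)) (hxs : xstar ∈ s)
    (hmin : ∀ x ∈ s, f xstar ≤ f x)
    (γ : ℝ) (hγ : γ ∈ Set.Ioc (0:ℝ) 1)
    (hquasar : ∀ x ∈ s, f xstar ≥ f x + (1/γ) * ⟪gradient f x, xstar - x⟫) :
    ∀ x ∈ s, ∀ t ∈ Set.Icc (0:ℝ) 1,
      f (t • xstar + (1 - t) • x) ≤ γ * t * f xstar + (1 - γ * t) * f x := by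
  obtain ⟨hγ0, hγ1⟩ := hγ
  intro x hx t ht
  obtain ⟨ht0, ht1⟩ := ht
  have hfx : f xstar ≤ f x := hmin x hx
  set A := f xstar with hA
  rcases eq_or_lt_of_le ht1 with h1 | h1
  · -- t = 1
    subst h1
    simp only [one_smul, sub_self, zero_smul, add_zero]
    nlinarith
  -- t < 1
  set v := xstar - x with hv
  set c : ℝ → EuclideanSpace ℝ (Fin n) := fun u => u • xstar + (1-u) • x with hc
  have hmem : ∀ u ∈ Set.Icc (0:ℝ) 1, c u ∈ s := by
    intro u hu
    exact hconv hxs hx hu.1 (by linarith [hu.2]) (by ring)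
  have hcd : ∀ u : ℝ, HasDerivAt c v u := by
    intro u
    have h : HasDerivAt (fun u : ℝ => u • v + x) ((1:ℝ) • v) u :=
      ((hasDerivAt_id u).smul_const v).add_const x
    rw [one_smul] at h
    convert h using 1
    funext u
    simp only [hc, hv, smul_sub, sub_smul, one_smul]
    abel
  -- derivative of f ∘ c
  have hg : ∀ u ∈ Set.Icc (0:ℝ) 1,
      HasDerivAt (fun w => f (c w)) ⟪gradient f (c u), v⟫ u := by
    intro u hu
    have hd := (hdiff (c u) (hmem u hu)).hasGradientAt
    have hF : HasFDerivAt f (InnerProductSpace.toDual ℝ _ (gradient f (c u))) (c u) :=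
      hasGradientAt_iff_hasFDerivAt.mp hd
    have := hF.comp_hasDerivAt u (hcd u)
    simp [Function.comp, InnerProductSpace.toDual_apply_apply] at this ⊢
    exact this
  -- key inequality
  have key : ∀ u ∈ Set.Icc (0:ℝ) 1,
      (1-u) * ⟪gradient f (c u), v⟫ + γ * (f (c u) - A) ≤ 0 := by
    intro u hu
    have hq := hquasar (c u) (hmem u hu)
    have hsub : xstar - c u = (1-u) • v := by
      simp only [hc, hv, smul_sub, sub_smul, one_smul]
      abel
    rw [hsub, real_inner_smul_right] at hq
    rw [ge_iff_le] at hq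
    have h2 : γ * (f (c u) + (1/γ) * ((1-u) * ⟪gradient f (c u), v⟫)) ≤ γ * A :=
      mul_le_mul_of_nonneg_left hq (le_of_lt hγ0)
    have hγne : γ ≠ 0 := ne_of_gt hγ0
    rw [mul_add, ← mul_assoc, mul_one_div_cancel hγne, one_mul] at h2
    linarith
  set ψ : ℝ → ℝ := fun u => (f (c u) - A) * (1-u) ^ (-γ) with hψ
  have hψd : ∀ u ∈ Set.Icc (0:ℝ) t,
      HasDerivAt ψ (⟪gradient f (c u), v⟫ * (1-u) ^ (-γ)
        + (f (c u) - A) * ((-1) * (-γ) * (1-u) ^ (-γ-1))) u := by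
    intro u hu
    have hu1 : u < 1 := lt_of_le_of_lt hu.2 h1
    have hne : (1:ℝ) - u ≠ 0 := by linarith
    have h1u : HasDerivAt (fun u : ℝ => 1 - u) (-1) u := by
      simpa using (hasDerivAt_id u).const_sub 1
    have hpow : HasDerivAt (fun u : ℝ => (1-u) ^ (-γ))
        ((-1) * (-γ) * (1-u) ^ (-γ-1)) u :=
      h1u.rpow_const (p := -γ) (Or.inl hne)
    have hgu := hg u ⟨hu.1, le_of_lt (lt_of_le_of_lt hu.2 h1)⟩
    exact (hgu.sub_const A).mul hpow
  have hψanti : AntitoneOn ψ (Set.Icc 0 t) := by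
    apply antitoneOn_of_deriv_nonpos (convex_Icc 0 t)
    · intro u hu
      exact (hψd u hu).continuousAt.continuousWithinAt
    · intro u hu
      rw [interior_Icc] at hu
      exact (hψd u ⟨le_of_lt hu.1, le_of_lt hu.2⟩).differentiableAt.differentiableWithinAt
    · intro u hu
      rw [interior_Icc] at hu
      have hu' : u ∈ Set.Icc (0:ℝ) t := ⟨le_of_lt hu.1, le_of_lt hu.2⟩
      rw [(hψd u hu').deriv]
      have hu1 : u < 1 := hu.2.trans h1
      have hpos : (0:ℝ) < 1 - u := by linarith
      have hk := key u ⟨le_of_lt hu.1, le_of_lt hu1⟩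
      have hsplit : (1-u) ^ (-γ) = (1-u) * (1-u) ^ (-γ-1) := by
        have h := Real.rpow_add hpos 1 (-γ-1)
        rw [Real.rpow_one] at h
        rw [show (1:ℝ) + (-γ - 1) = -γ by ring] at h
        exact h
      have hnn : (0:ℝ) ≤ (1-u) ^ (-γ-1) := Real.rpow_nonneg (le_of_lt hpos) _
      calc ⟪gradient f (c u), v⟫ * (1-u) ^ (-γ)
            + (f (c u) - A) * ((-1) * (-γ) * (1-u) ^ (-γ-1))
          = ((1-u) * ⟪gradient f (c u), v⟫ + γ * (f (c u) - A)) * (1-u) ^ (-γ-1) := by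
            rw [hsplit]; ring
        _ ≤ 0 * (1-u) ^ (-γ-1) := mul_le_mul_of_nonneg_right hk hnn
        _ = 0 := by ring
  have hψle : ψ t ≤ ψ 0 :=
    hψanti (Set.left_mem_Icc.mpr ht0) (Set.right_mem_Icc.mpr ht0) ht0
  have hψ0 : ψ 0 = f x - A := by
    simp [hψ, hc, Real.one_rpow]
  have hpos : (0:ℝ) < 1 - t := by linarith
  have hmul : f (c t) - A ≤ (f x - A) * (1-t) ^ γ := by
    have h2 := mul_le_mul_of_nonneg_right hψle (Real.rpow_nonneg (le_of_lt hpos) γ)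
    have hcancel : (1-t) ^ (-γ) * (1-t) ^ γ = 1 := by
      rw [← Real.rpow_add hpos]; simp
    rw [hψ0] at h2
    calc f (c t) - A = (f (c t) - A) * ((1-t) ^ (-γ) * (1-t) ^ γ) := by
          rw [hcancel]; ring
      _ = ψ t * (1-t) ^ γ := by rw [hψ]; ring
      _ ≤ (f x - A) * (1-t) ^ γ := h2
  have hbern : (1-t) ^ γ ≤ 1 - γ * t := by
    have := rpow_one_add_le_one_add_mul_self (s := -t) (by linarith) (le_of_lt hγ0) hγ1
    simpa [sub_eq_add_neg, mul_comm] using this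
  have hfinal : (f x - A) * (1-t) ^ γ ≤ (f x - A) * (1 - γ * t) :=
    mul_le_mul_of_nonneg_left hbern (by linarith)
  have : f (c t) ≤ A + (f x - A) * (1 - γ * t) := by linarith
  calc f (t • xstar + (1-t) • x) = f (c t) := rfl
    _ ≤ A + (f x - A) * (1 - γ * t) := this
    _ = γ * t * A + (1 - γ * t) * f x := by ring
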